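/- Let p ≥ 1 be an integer, θ > 0, σ ∈ (0, 1), let sequences generated by the conceptual algorithmic framework be given satisfying in addition the large-step condition λ_{i}·‖y_{i} − x_{i−1}‖^{p−1} ≥ θ for all i ≥ 1, and let z* ∈ H with 0 ∈ A z* and x_0 ≠ z*. Then for every integer k ≥ 1: ∑_{i=1}^k λ_i ≥ θ · ((1 − σ²)/‖x_0 − z*‖²)^{(p−1)/2} · k^{(p+1)/2}. -/

import Mathlib

open scoped Pointwise
open RealInnerProductSpace Filter Topology Set Metric

/-- Sequences generated by the conceptual algorithmic framework: for all `k ≥ 0`,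
`v_{k+1}` lies in the `ε_{k+1}`-enlargement `A^{ε_{k+1}}(y_{k+1})`, the relative error
condition `‖λ_{k+1} v_{k+1} + y_{k+1} - x_k‖² + 2 λ_{k+1} ε_{k+1} ≤ σ² ‖y_{k+1} - x_k‖²`
holds, and `x_{k+1} = x_k - λ_{k+1} v_{k+1}`. -/
def CAF {H : Type*} [NormedAddCommGroup H] [InnerProductSpace ℝ H]
    (A : H → Set H) (σ : ℝ) (x y v : ℕ → H) (lam eps : ℕ → ℝ) : Prop :=
  ∀ k : ℕ,
    0 < lam (k + 1) ∧ 0 ≤ eps (k + 1) ∧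
    (∀ xt vt : H, vt ∈ A xt → -(eps (k + 1)) ≤ ⟪y (k + 1) - xt, v (k + 1) - vt⟫) ∧
    ‖lam (k + 1) • v (k + 1) + y (k + 1) - x k‖ ^ 2 + 2 * lam (k + 1) * eps (k + 1)
      ≤ σ ^ 2 * ‖y (k + 1) - x k‖ ^ 2 ∧
    x (k + 1) = x k - lam (k + 1) • v (k + 1)

theorem caf_key_dec {H : Type*} [NormedAddCommGroup H] [InnerProductSpace ℝ H]
    {A : H → Set H} {σ : ℝ} {x y v : ℕ → H} {lam eps : ℕ → ℝ}
    (hCAF : CAF A σ x y v lam eps) {zstar : H} (hz : 0 ∈ A zstar) (i : ℕ) :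
    (1 - σ ^ 2) * ‖y (i + 1) - x i‖ ^ 2
      ≤ ‖x i - zstar‖ ^ 2 - ‖x (i + 1) - zstar‖ ^ 2 := by
  obtain ⟨hlam, heps, henl, herr, hxi⟩ := hCAF i
  have h1 : -(eps (i + 1)) ≤ ⟪y (i + 1) - zstar, v (i + 1)⟫ := by
    simpa using henl zstar 0 hz
  set u : H := lam (i + 1) • v (i + 1) with hu
  set d : H := y (i + 1) - x i with hd
  set w : H := y (i + 1) - zstar with hw
  have he : lam (i + 1) • v (i + 1) + y (i + 1) - x i = u + d := by
    rw [hu, hd]; abel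
  rw [he] at herr
  have E1 : ‖x (i + 1) - zstar‖ ^ 2 = ‖x i - zstar‖ ^ 2 - 2 * ⟪x i - zstar, u⟫ + ‖u‖ ^ 2 := by
    rw [hxi, sub_right_comm]; exact norm_sub_sq_real _ _
  have E2 : ‖u + d‖ ^ 2 = ‖u‖ ^ 2 + 2 * ⟪u, d⟫ + ‖d‖ ^ 2 := norm_add_sq_real _ _
  have E3 : ⟪x i - zstar, u⟫ = ⟪w, u⟫ - ⟪d, u⟫ := by
    have h : x i - zstar = w - d := by rw [hw, hd]; abel
    rw [h, inner_sub_left]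
  have E4 : ⟪w, u⟫ = lam (i + 1) * ⟪w, v (i + 1)⟫ := real_inner_smul_right _ _ _
  have E5 : ⟪u, d⟫ = ⟪d, u⟫ := real_inner_comm _ _
  have h5 : lam (i + 1) * (-(eps (i + 1))) ≤ lam (i + 1) * ⟪w, v (i + 1)⟫ :=
    mul_le_mul_of_nonneg_left h1 hlam.le
  nlinarith [E1, E2, E3, E4, E5, herr, h5]

/-- Under the large-step condition `λ_i ‖y_i - x_{i-1}‖^{p-1} ≥ θ`,
the stepsizes satisfy `∑_{i=1}^k λ_i ≥ θ ((1-σ²)/‖x_0 - z*‖²)^{(p-1)/2} k^{(p+1)/2}`. -/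
theorem stmt_17 {H : Type*} [NormedAddCommGroup H] [InnerProductSpace ℝ H] [CompleteSpace H]
    (A : H → Set H)
    (hmono : ∀ x y u v : H, u ∈ A x → v ∈ A y → 0 ≤ ⟪u - v, x - y⟫)
    (hmax : ∀ v x : H, (∀ z u : H, u ∈ A z → 0 ≤ ⟪v - u, x - z⟫) → v ∈ A x)
    (p : ℕ) (hp : 1 ≤ p) (θ : ℝ) (hθ : 0 < θ)
    (σ : ℝ) (hσ : σ ∈ Set.Ioo (0 : ℝ) 1)
    (x y v : ℕ → H) (lam eps : ℕ → ℝ)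
    (hCAF : CAF A σ x y v lam eps)
    (hstep : ∀ i : ℕ, 1 ≤ i → θ ≤ lam i * ‖y i - x (i - 1)‖ ^ (p - 1))
    (zstar : H) (hz : 0 ∈ A zstar) (hx0 : x 0 ≠ zstar)
    (k : ℕ) (hk : 1 ≤ k) :
    θ * ((1 - σ ^ 2) / ‖x 0 - zstar‖ ^ 2) ^ (((p : ℝ) - 1) / 2) *
        (k : ℝ) ^ (((p : ℝ) + 1) / 2)
      ≤ ∑ i ∈ Finset.Icc 1 k, lam i := by
  obtain ⟨hσ0, hσ1⟩ := hσ
  have hσ2 : 0 < 1 - σ ^ 2 := by nlinarith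
  set R : ℝ := ‖x 0 - zstar‖ ^ 2 with hR
  have hR0 : 0 < R := by
    have h : x 0 - zstar ≠ 0 := sub_ne_zero.mpr hx0
    have := norm_pos_iff.mpr h
    positivity
  set D : ℕ → ℝ := fun j => ‖y (j + 1) - x j‖ with hD
  have hDnn : ∀ j, 0 ≤ D j := fun j => norm_nonneg _
  -- telescoping bound on ∑ D j ^ 2
  set S : ℝ := ∑ j ∈ Finset.range k, D j ^ 2 with hS
  have hSnn : 0 ≤ S := Finset.sum_nonneg fun j _ => sq_nonneg _
  have hSR : (1 - σ ^ 2) * S ≤ R := by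
    have h1 : ∑ j ∈ Finset.range k, (1 - σ ^ 2) * D j ^ 2
        ≤ ∑ j ∈ Finset.range k, (‖x j - zstar‖ ^ 2 - ‖x (j + 1) - zstar‖ ^ 2) :=
      Finset.sum_le_sum fun j _ => caf_key_dec hCAF hz j
    rw [Finset.sum_range_sub' (fun j => ‖x j - zstar‖ ^ 2) k] at h1
    have h2 : ‖x 0 - zstar‖ ^ 2 - ‖x k - zstar‖ ^ 2 ≤ R := by
      have : (0:ℝ) ≤ ‖x k - zstar‖ ^ 2 := sq_nonneg _
      linarith
    calc (1 - σ ^ 2) * S = ∑ j ∈ Finset.range k, (1 - σ ^ 2) * D j ^ 2 := by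
          rw [hS, Finset.mul_sum]
      _ ≤ R := le_trans h1 h2
  -- convert goal sum
  have hIcc : ∑ i ∈ Finset.Icc 1 k, lam i = ∑ j ∈ Finset.range k, lam (j + 1) := by
    rw [← Finset.Ico_add_one_right_eq_Icc, Finset.sum_Ico_eq_sum_range]
    simp [add_comm]
  rw [hIcc]
  have hstep' : ∀ j : ℕ, θ ≤ lam (j + 1) * D j ^ (p - 1) := by
    intro j
    have := hstep (j + 1) (Nat.le_add_left 1 j)
    simpa [hD] using this
  have hlampos : ∀ j : ℕ, 0 < lam (j + 1) := fun j => (hCAF j).1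
  rcases eq_or_lt_of_le hp with hp1 | hp2
  · -- p = 1
    subst hp1
    simp only [Nat.cast_one]
    rw [show ((1:ℝ) - 1) / 2 = 0 by norm_num, Real.rpow_zero,
      show ((1:ℝ) + 1) / 2 = 1 by norm_num, Real.rpow_one, mul_one]
    have : ∀ j ∈ Finset.range k, θ ≤ lam (j + 1) := by
      intro j _
      have := hstep' j
      simpa using this
    calc θ * (k : ℝ) = ∑ _j ∈ Finset.range k, θ := by
          rw [Finset.sum_const, Finset.card_range, nsmul_eq_mul, mul_comm]
      _ ≤ ∑ j ∈ Finset.range k, lam (j + 1) := Finset.sum_le_sum this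
  · -- 2 ≤ p
    have hp2' : 2 ≤ p := hp2
    have hpR : (2:ℝ) ≤ (p:ℝ) := by exact_mod_cast hp2'
    have hDpos : ∀ j, 0 < D j := by
      intro j
      rcases (hDnn j).lt_or_eq with h | h
      · exact h
      · exfalso
        have h0 : D j ^ (p - 1) = 0 := by
          rw [← h]; exact zero_pow (by omega)
        have := hstep' j
        rw [h0, mul_zero] at this
        linarith
    -- λ_{j+1} ≥ θ * D j ^ (1 - p)
    have hlamT : ∀ j : ℕ, θ * D j ^ ((1:ℝ) - (p:ℝ)) ≤ lam (j + 1) := by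
      intro j
      have hcast : (D j : ℝ) ^ (p - 1 : ℕ) = D j ^ ((p:ℝ) - 1) := by
        rw [← Real.rpow_natCast (D j) (p - 1)]
        congr 1
        push_cast [Nat.cast_sub hp]
        ring
      have hpow : 0 < D j ^ ((p:ℝ) - 1) := Real.rpow_pos_of_pos (hDpos j) _
      have h1 : θ / D j ^ ((p:ℝ) - 1) ≤ lam (j + 1) := by
        rw [div_le_iff₀ hpow]
        rw [← hcast]
        exact hstep' j
      have h2 : θ * D j ^ ((1:ℝ) - (p:ℝ)) = θ / D j ^ ((p:ℝ) - 1) := by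
        rw [show (1:ℝ) - (p:ℝ) = -((p:ℝ) - 1) by ring, Real.rpow_neg (hDpos j).le,
          div_eq_mul_inv]
      linarith [h2 ▸ h1]
    set T : ℝ := ∑ j ∈ Finset.range k, D j ^ ((1:ℝ) - (p:ℝ)) with hT
    have hTnn : 0 ≤ T :=
      Finset.sum_nonneg fun j _ => (Real.rpow_pos_of_pos (hDpos j) _).le
    have hsumlam : θ * T ≤ ∑ j ∈ Finset.range k, lam (j + 1) := by
      rw [hT, Finset.mul_sum]
      exact Finset.sum_le_sum fun j _ => hlamT j
    -- Hölder
    have hne1 : (p:ℝ) - 1 ≠ 0 := by linarith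
    have hne2 : (p:ℝ) + 1 ≠ 0 := by linarith
    have hq : Real.HolderConjugate (((p:ℝ) + 1) / ((p:ℝ) - 1)) (((p:ℝ) + 1) / 2) := by
      rw [Real.holderConjugate_iff]
      constructor
      · rw [lt_div_iff₀ (by linarith)]; linarith
      · field_simp
        ring
    set e : ℝ := 2 * ((p:ℝ) - 1) / ((p:ℝ) + 1) with he
    have hfg : ∀ j, D j ^ e * D j ^ (-e) = 1 := by
      intro j
      rw [← Real.rpow_add (hDpos j)]
      simp
    have habs1 : ∀ j, |D j ^ e| ^ (((p:ℝ) + 1) / ((p:ℝ) - 1)) = D j ^ 2 := by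
      intro j
      rw [abs_of_nonneg (Real.rpow_nonneg (hDnn j) _), ← Real.rpow_mul (hDnn j),
        show e * (((p:ℝ) + 1) / ((p:ℝ) - 1)) = 2 by rw [he]; field_simp,
        show (2:ℝ) = ((2:ℕ):ℝ) by norm_num, Real.rpow_natCast]
    have habs2 : ∀ j, |D j ^ (-e)| ^ (((p:ℝ) + 1) / 2) = D j ^ ((1:ℝ) - (p:ℝ)) := by
      intro j
      rw [abs_of_nonneg (Real.rpow_nonneg (hDnn j) _), ← Real.rpow_mul (hDnn j)]
      congr 1
      rw [he]; field_simp; ring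
    have hholder : (k:ℝ) ≤ S ^ (((p:ℝ) - 1) / ((p:ℝ) + 1)) * T ^ (2 / ((p:ℝ) + 1)) := by
      have Hh := Real.inner_le_Lp_mul_Lq (Finset.range k)
        (fun j => D j ^ e) (fun j => D j ^ (-e)) hq
      have hL : ∑ j ∈ Finset.range k, D j ^ e * D j ^ (-e) = (k:ℝ) := by
        rw [Finset.sum_congr rfl (fun j _ => hfg j)]
        simp
      have hA : ∑ j ∈ Finset.range k, |D j ^ e| ^ (((p:ℝ) + 1) / ((p:ℝ) - 1)) = S := by
        rw [Finset.sum_congr rfl (fun j _ => habs1 j), hS]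
      have hB : ∑ j ∈ Finset.range k, |D j ^ (-e)| ^ (((p:ℝ) + 1) / 2) = T := by
        rw [Finset.sum_congr rfl (fun j _ => habs2 j), hT]
      rw [hL, hA, hB, one_div_div, one_div_div] at Hh
      exact Hh
    have hexp : (0:ℝ) ≤ ((p:ℝ) + 1) / 2 := by positivity
    have hk2 : (k:ℝ) ^ (((p:ℝ) + 1) / 2) ≤ S ^ (((p:ℝ) - 1) / 2) * T := by
      have h := Real.rpow_le_rpow (Nat.cast_nonneg k) hholder hexp
      rw [Real.mul_rpow (Real.rpow_nonneg hSnn _) (Real.rpow_nonneg hTnn _),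
        ← Real.rpow_mul hSnn, ← Real.rpow_mul hTnn,
        show ((p:ℝ) - 1) / ((p:ℝ) + 1) * (((p:ℝ) + 1) / 2) = ((p:ℝ) - 1) / 2 by
          field_simp,
        show 2 / ((p:ℝ) + 1) * (((p:ℝ) + 1) / 2) = 1 by field_simp,
        Real.rpow_one] at h
      exact h
    have hC1 : ((1 - σ ^ 2) / R * S) ^ (((p:ℝ) - 1) / 2) ≤ 1 := by
      apply Real.rpow_le_one (by positivity) _ (by linarith)
      rw [show (1 - σ ^ 2) / R * S = (1 - σ ^ 2) * S / R by ring]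
      exact (div_le_one hR0).mpr hSR
    calc θ * ((1 - σ ^ 2) / R) ^ (((p:ℝ) - 1) / 2) * (k:ℝ) ^ (((p:ℝ) + 1) / 2)
        ≤ θ * ((1 - σ ^ 2) / R) ^ (((p:ℝ) - 1) / 2) * (S ^ (((p:ℝ) - 1) / 2) * T) :=
          mul_le_mul_of_nonneg_left hk2 (by positivity)
      _ = θ * (((1 - σ ^ 2) / R * S) ^ (((p:ℝ) - 1) / 2) * T) := by
          rw [Real.mul_rpow (by positivity) hSnn]; ring
      _ ≤ θ * (1 * T) := by
          apply mul_le_mul_of_nonneg_left _ hθ.le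
          exact mul_le_mul_of_nonneg_right hC1 hTnn
      _ = θ * T := by ring
      _ ≤ ∑ j ∈ Finset.range k, lam (j + 1) := hsumlam
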